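/- Let (M,ρ) be a complete metric space, let f : M → ℝ ∪ {+∞} be proper, lower semicontinuous and bounded below, and let g : M → ℝ be continuous. Assume |∇̃f|(x) > |∇̃g|(x) for every x ∈ dom f with |∇̃f|(x) ≠ 0. Then for each ε > 0 and each x₀ ∈ M there exists x ∈ ε-Crit f such that f(x) ≤ f(x₀) - ε·ρ(x, x₀) and f(x₀) - g(x₀) ≥ f(x) - g(x). In particular f - g ≥ inf { f(y) - g(y) : y ∈ ε-Crit f } everywhere. -/

import Mathlib

open Filter Topology ENNReal

/-- The positive part `[x]⁺` of an extended real, as an element of `ℝ≥0∞`. -/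
noncomputable def erealPos (x : EReal) : ℝ≥0∞ := if x = ⊤ then ⊤ else ENNReal.ofReal x.toReal

/-- The global slope `|∇̃ f|(x) = sup_{y ≠ x} [f x - f y]⁺ / ρ(x,y)` of `f : M → ℝ ∪ {+∞}`. -/
noncomputable def globalSlope {M : Type*} [MetricSpace M] (f : M → EReal) (x : M) : ℝ≥0∞ :=
  ⨆ y ∈ {y : M | y ≠ x}, erealPos (f x - f y) / edist x y

/-- The local slope `|∇ f|(x) = limsup_{y → x, y ≠ x} [f x - f y]⁺ / ρ(x,y)`. -/
noncomputable def localSlope {M : Type*} [MetricSpace M] (f : M → EReal) (x : M) : ℝ≥0∞ :=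
  Filter.limsup (fun y => erealPos (f x - f y) / edist x y) (𝓝[≠] x)

/-- `ε`-global-critical points: `x ∈ dom f` with `f y ≥ f x - ε·ρ(y,x)` for all `y`. -/
def epsCrit {M : Type*} [MetricSpace M] (ε : ℝ) (f : M → EReal) : Set M :=
  {x | f x ≠ ⊤ ∧ ∀ y, f x - ↑(ε * dist y x) ≤ f y}

theorem erealPos_coe (a : ℝ) : erealPos (a : EReal) = ENNReal.ofReal a := by
  simp [erealPos, EReal.coe_toReal]

theorem erealPos_bot : erealPos (⊥ : EReal) = 0 := by
  simp [erealPos]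

/-- The combined Ekeland order. -/
def EkRel {M : Type*} [MetricSpace M] (f : M → EReal) (g : M → ℝ) (ε : ℝ) (y x : M) : Prop :=
  f y + ↑(ε * dist y x) ≤ f x ∧ f y - ↑(g y) ≤ f x - ↑(g x)

theorem ekRel_def {M : Type*} [MetricSpace M] {f : M → EReal} {g : M → ℝ} {ε : ℝ} {y x : M} :
    EkRel f g ε y x ↔
      (f y + ↑(ε * dist y x) ≤ f x ∧ f y - ↑(g y) ≤ f x - ↑(g x)) := Iff.rfl

/-- Ekeland-type existence of a minimal point for the combined order. -/
theorem exists_min_combined {M : Type*} [MetricSpace M] [CompleteSpace M]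
    (f : M → EReal) (g : M → ℝ)
    (hlsc : LowerSemicontinuous f) {C : ℝ} (hC : ∀ x, (C : EReal) ≤ f x) (hg : Continuous g)
    (ε : ℝ) (hε : 0 < ε) (x₀ : M) (hx₀ : f x₀ ≠ ⊤) :
    ∃ x : M, f x ≠ ⊤ ∧ EkRel f g ε x x₀ ∧
      (∀ z, EkRel f g ε z x → z = x) := by
  classical
  set D : Set M := {x | f x ≠ ⊤} with hDdef
  set F : M → ℝ := fun x => (f x).toReal with hF
  have hne_bot : ∀ x, f x ≠ ⊥ := fun x =>
    ((lt_of_lt_of_le (EReal.bot_lt_coe C) (hC x))).ne'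
  have hD : ∀ x ∈ D, ((F x : ℝ) : EReal) = f x := fun x hx =>
    EReal.coe_toReal hx (hne_bot x)
  have hrefl : ∀ x, EkRel f g ε x x := by
    intro x
    rw [ekRel_def]
    constructor
    · simp
    · exact le_refl _
  -- EkRel y x with x ∈ D forces y ∈ D
  have hdom : ∀ x ∈ D, ∀ y, EkRel f g ε y x → y ∈ D := by
    intro x hx y hy
    have h0 : (0 : EReal) ≤ ↑(ε * dist y x) := by
      exact_mod_cast mul_nonneg hε.le dist_nonneg
    have hle : f y ≤ f x := by
      calc f y = f y + 0 := (add_zero _).symm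
        _ ≤ f y + ↑(ε * dist y x) := add_le_add_right h0 _
        _ ≤ f x := hy.1
    exact fun hT => hx (top_le_iff.mp (hT ▸ hle))
  -- real form on D
  have hreal : ∀ x ∈ D, ∀ y ∈ D, (EkRel f g ε y x ↔
      (F y + ε * dist y x ≤ F x ∧ F y - g y ≤ F x - g x)) := by
    intro x hx y hy
    rw [ekRel_def, ← hD x hx, ← hD y hy]
    constructor
    · rintro ⟨h1, h2⟩; exact ⟨by exact_mod_cast h1, by exact_mod_cast h2⟩
    · rintro ⟨h1, h2⟩; exact ⟨by exact_mod_cast h1, by exact_mod_cast h2⟩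
  have htrans : ∀ x y z, EkRel f g ε z y → EkRel f g ε y x → EkRel f g ε z x := by
    intro x y z hzy hyx
    constructor
    · have h1 : f z + ↑(ε * dist z y) + ↑(ε * dist y x) ≤ f x :=
        le_trans (add_le_add_left hzy.1 _) hyx.1
      have h2 : (↑(ε * dist z x) : EReal) ≤ ↑(ε * dist z y) + ↑(ε * dist y x) := by
        rw [← EReal.coe_add]
        exact_mod_cast by nlinarith [dist_triangle z y x]
      calc f z + ↑(ε * dist z x) ≤ f z + (↑(ε * dist z y) + ↑(ε * dist y x)) :=
            add_le_add_right h2 _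
        _ = f z + ↑(ε * dist z y) + ↑(ε * dist y x) := (add_assoc _ _ _).symm
        _ ≤ f x := h1
    · exact le_trans hzy.2 hyx.2
  have hCF : ∀ x ∈ D, C ≤ F x := by
    intro x hx
    have h := hC x
    rw [← hD x hx] at h
    exact_mod_cast h
  -- existence of a good next point
  have hgood : ∀ n : ℕ, ∀ x ∈ D, ∃ y, EkRel f g ε y x ∧
      ∀ z, EkRel f g ε z y → F y - (1/2)^n ≤ F z := by
    intro n x hx
    set s : Set ℝ := F '' {z | EkRel f g ε z x} with hs
    have hsne : s.Nonempty := ⟨F x, x, hrefl x, rfl⟩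
    have hsbdd : BddBelow s := by
      refine ⟨C, ?_⟩
      rintro a ⟨z, hz, rfl⟩
      exact hCF z (hdom x hx z hz)
    have hlt : sInf s < sInf s + (1/2)^n := by
      have : (0:ℝ) < (1/2)^n := by positivity
      linarith
    obtain ⟨a, ⟨y, hy, rfl⟩, ha⟩ := exists_lt_of_csInf_lt hsne hlt
    refine ⟨y, hy, ?_⟩
    intro z hz
    have hzx : EkRel f g ε z x := htrans x y z hz hy
    have : sInf s ≤ F z := csInf_le hsbdd ⟨z, hzx, rfl⟩
    linarith
  choose! Y hY1 hY2 using hgood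
  set seq : ℕ → M := fun n => Nat.rec x₀ (fun k xk => Y k xk) n with hseq
  have hs0 : seq 0 = x₀ := rfl
  have hssucc : ∀ n, seq (n+1) = Y n (seq n) := fun n => rfl
  have hDn : ∀ n, seq n ∈ D := by
    intro n
    induction n with
    | zero => exact hx₀
    | succ k ih =>
      rw [hssucc]
      exact hdom (seq k) ih _ (hY1 k (seq k) ih)
  have hrs : ∀ n, EkRel f g ε (seq (n+1)) (seq n) := by
    intro n; rw [hssucc]; exact hY1 n (seq n) (hDn n)
  have hms : ∀ n, ∀ z, EkRel f g ε z (seq (n+1)) → F (seq (n+1)) - (1/2)^n ≤ F z := by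
    intro n; rw [hssucc]; exact hY2 n (seq n) (hDn n)
  have hrle : ∀ n m, n ≤ m → EkRel f g ε (seq m) (seq n) := by
    intro n m h
    induction m, h using Nat.le_induction with
    | base => exact hrefl _
    | succ m hm ih => exact htrans (seq n) (seq m) _ (hrs m) ih
  have hrlereal : ∀ n m, n ≤ m → F (seq m) + ε * dist (seq m) (seq n) ≤ F (seq n) ∧
      F (seq m) - g (seq m) ≤ F (seq n) - g (seq n) :=
    fun n m h => (hreal (seq n) (hDn n) (seq m) (hDn m)).mp (hrle n m h)
  have hanti : Antitone (fun n => F (seq n)) := by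
    intro n m h
    have h1 := (hrlereal n m h).1
    nlinarith [mul_nonneg hε.le (dist_nonneg (x := seq m) (y := seq n))]
  have hbdd : BddBelow (Set.range fun n => F (seq n)) := ⟨C, by
    rintro a ⟨n, rfl⟩; exact hCF _ (hDn n)⟩
  set L : ℝ := ⨅ n, F (seq n) with hLdef
  have hL : Filter.Tendsto (fun n => F (seq n)) atTop (𝓝 L) :=
    tendsto_atTop_ciInf hanti hbdd
  have hLle : ∀ n, L ≤ F (seq n) := fun n => ciInf_le hbdd n
  -- Cauchy
  have hcauchy : CauchySeq seq := by
    refine cauchySeq_of_le_tendsto_0 (fun N => (F (seq N) - L) / ε) ?_ ?_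
    · intro n m N hn hm
      have key : ∀ a b, N ≤ a → a ≤ b → dist (seq b) (seq a) ≤ (F (seq N) - L) / ε := by
        intro a b ha hab
        have h1 := (hrlereal a b hab).1
        have h2 : L ≤ F (seq b) := hLle b
        have h3 : F (seq a) ≤ F (seq N) := hanti ha
        rw [le_div_iff₀ hε]
        nlinarith
      rcases le_total n m with h | h
      · rw [dist_comm]; exact key n m hn h
      · exact key m n hm h
    · have h := (hL.sub (tendsto_const_nhds (x := L))).div_const ε
      simpa using h
  obtain ⟨xb, hxb⟩ := cauchySeq_tendsto_of_complete hcauchy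
  -- f xb ≤ L
  have hfxb : f xb ≤ (L : EReal) := by
    by_contra h
    push_neg at h
    obtain ⟨y, hy1, hy2⟩ := exists_between h
    have hyT : y ≠ ⊤ := (lt_of_lt_of_le hy2 le_top).ne
    have hyB : y ≠ ⊥ := (lt_trans (EReal.bot_lt_coe L) hy1).ne'
    set r : ℝ := y.toReal with hr
    have hyr : (r : EReal) = y := EReal.coe_toReal hyT hyB
    have hLr : L < r := by
      rw [← hyr] at hy1
      exact_mod_cast hy1
    have hev2 : ∀ᶠ n in atTop, y < f (seq n) := hxb.eventually (hlsc xb y hy2)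
    have hev3 : ∀ᶠ n in atTop, F (seq n) < r := hL.eventually_lt_const hLr
    obtain ⟨n, h1, h2⟩ := (hev2.and hev3).exists
    rw [← hyr, ← hD (seq n) (hDn n)] at h1
    have : r < F (seq n) := by exact_mod_cast h1
    linarith
  have hxbD : xb ∈ D := fun hT => by
    rw [hT] at hfxb
    exact (EReal.coe_lt_top L).ne (top_le_iff.mp hfxb)
  have hFxb : F xb ≤ L := by
    rw [← hD xb hxbD] at hfxb
    exact_mod_cast hfxb
  -- EkRel xb (seq n) for all n
  have hrelxb : ∀ n, EkRel f g ε xb (seq n) := by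
    intro n
    rw [hreal (seq n) (hDn n) xb hxbD]
    have hA : L + ε * dist xb (seq n) ≤ F (seq n) := by
      have hT : Filter.Tendsto (fun m => F (seq m) + ε * dist (seq m) (seq n)) atTop
          (𝓝 (L + ε * dist xb (seq n))) :=
        hL.add ((hxb.dist tendsto_const_nhds).const_mul ε)
      refine le_of_tendsto hT ?_
      filter_upwards [eventually_ge_atTop n] with m hm
      exact (hrlereal n m hm).1
    have hB : L - g xb ≤ F (seq n) - g (seq n) := by
      have hT : Filter.Tendsto (fun m => F (seq m) - g (seq m)) atTop (𝓝 (L - g xb)) :=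
        hL.sub ((hg.tendsto xb).comp hxb)
      refine le_of_tendsto hT ?_
      filter_upwards [eventually_ge_atTop n] with m hm
      exact (hrlereal n m hm).2
    constructor
    · linarith
    · linarith
  -- minimality
  have hmin : ∀ z, EkRel f g ε z xb → z = xb := by
    intro z hz
    have hzD : z ∈ D := hdom xb hxbD z hz
    have hzn : ∀ n, EkRel f g ε z (seq n) := fun n =>
      htrans (seq n) xb z hz (hrelxb n)
    have hzL : L ≤ F z := by
      have hT : Filter.Tendsto (fun n => F (seq (n+1)) - (1/2)^n) atTop (𝓝 (L - 0)) := by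
        refine Filter.Tendsto.sub ?_ ?_
        · exact hL.comp (tendsto_add_atTop_nat 1)
        · exact tendsto_pow_atTop_nhds_zero_of_lt_one (by norm_num) (by norm_num)
      rw [sub_zero] at hT
      exact le_of_tendsto hT (Filter.Eventually.of_forall fun n => hms n z (hzn (n+1)))
    have h1 := ((hreal xb hxbD z hzD).mp hz).1
    have hd : dist z xb = 0 := by
      by_contra hne
      have hdpos : 0 < dist z xb := lt_of_le_of_ne dist_nonneg (Ne.symm hne)
      nlinarith
    exact eq_of_dist_eq_zero hd
  exact ⟨xb, hxbD, hs0 ▸ hrelxb 0, hmin⟩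

/-- global-slope version of Statement 12: for `f` proper lsc bounded below on
a complete metric space and `g : M → ℝ` continuous with `|∇̃f| > |∇̃g|` wherever `|∇̃f| ≠ 0`
on `dom f`, for each `ε > 0` and `x₀` there is `x ∈ ε-Crit f` with
`f(x) ≤ f(x₀) - ε·ρ(x,x₀)` and `f(x₀) - g(x₀) ≥ f(x) - g(x)`; in particular
`f - g ≥ inf_{ε-Crit f} (f - g)` everywhere. -/
theorem exists_epsCrit_global_slope {M : Type*} [MetricSpace M] [CompleteSpace M]
    (f : M → EReal) (g : M → ℝ)
    (hproper : ∃ x, f x ≠ ⊤) (hlsc : LowerSemicontinuous f)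
    (hbdd : ∃ C : ℝ, ∀ x, (C : EReal) ≤ f x) (hg : Continuous g)
    (hslope : ∀ x, f x ≠ ⊤ → globalSlope f x ≠ 0 →
      globalSlope (fun y => (g y : EReal)) x < globalSlope f x) :
    ∀ ε : ℝ, 0 < ε → ∀ x₀ : M,
      (∃ x ∈ epsCrit ε f,
        f x ≤ f x₀ - ↑(ε * dist x x₀) ∧ f x - ↑(g x) ≤ f x₀ - ↑(g x₀)) ∧
      (⨅ y ∈ epsCrit ε f, (f y - ↑(g y))) ≤ f x₀ - ↑(g x₀) := by
  obtain ⟨C, hC⟩ := hbdd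
  have hne_bot : ∀ x, f x ≠ ⊥ := fun x =>
    ((lt_of_lt_of_le (EReal.bot_lt_coe C) (hC x))).ne'
  intro ε hε x₀
  -- main claim for a base point in the domain
  have key : ∀ x₀' : M, f x₀' ≠ ⊤ → ∃ x ∈ epsCrit ε f,
      f x ≤ f x₀' - ↑(ε * dist x x₀') ∧ f x - ↑(g x) ≤ f x₀' - ↑(g x₀') := by
    intro x₀' hx₀'
    obtain ⟨xb, hxbD, hrel0, hmin⟩ :=
      exists_min_combined f g hlsc hC hg ε hε x₀' hx₀'
    have hDxb : (((f xb).toReal : ℝ) : EReal) = f xb := EReal.coe_toReal hxbD (hne_bot xb)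
    set Fxb : ℝ := (f xb).toReal with hFxb
    -- the value of slope terms
    have hterm : ∀ y, f y ≠ ⊤ → 0 < dist xb y →
        erealPos (f xb - f y) / edist xb y
          = ENNReal.ofReal ((Fxb - (f y).toReal) / dist xb y) := by
      intro y hyT hd
      have hDy : (((f y).toReal : ℝ) : EReal) = f y := EReal.coe_toReal hyT (hne_bot y)
      have hsub : f xb - f y = ((Fxb - (f y).toReal : ℝ) : EReal) := by
        rw [← hDxb, ← hDy]; norm_cast
      rw [hsub, erealPos_coe, edist_dist, ENNReal.ofReal_div_of_pos hd]
    have hterm_top : ∀ y, f y = ⊤ →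
        erealPos (f xb - f y) / edist xb y = 0 := by
      intro y hyT
      rw [hyT, EReal.sub_top]
      · rw [erealPos_bot, ENNReal.zero_div]
    -- xb is an ε-critical point
    have hcrit : xb ∈ epsCrit ε f := by
      refine ⟨hxbD, ?_⟩
      by_contra hcon
      push_neg at hcon
      obtain ⟨y, hy⟩ := hcon
      have hyT : f y ≠ ⊤ := by
        intro hT
        rw [hT] at hy
        exact lt_irrefl ⊤ (lt_of_lt_of_le hy le_top)
      have hDy : (((f y).toReal : ℝ) : EReal) = f y := EReal.coe_toReal hyT (hne_bot y)
      set Fy : ℝ := (f y).toReal with hFy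
      have hyreal : Fy < Fxb - ε * dist y xb := by
        rw [← hDy, ← hDxb] at hy
        exact_mod_cast hy
      have hyx : y ≠ xb := by
        intro h
        rw [h] at hy
        simp at hy
      have hd : 0 < dist xb y := dist_pos.mpr (Ne.symm hyx)
      -- first: ofReal ε < globalSlope f xb
      have hSe : ENNReal.ofReal ε < globalSlope f xb := by
        have h1 : ENNReal.ofReal ε < erealPos (f xb - f y) / edist xb y := by
          rw [hterm y hyT hd, ENNReal.ofReal_lt_ofReal_iff_of_nonneg hε.le,
            lt_div_iff₀ hd]
          rw [dist_comm xb y]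
          linarith
        refine lt_of_lt_of_le h1 ?_
        exact le_iSup₂ (f := fun y (_ : y ∈ {y : M | y ≠ xb}) =>
          erealPos (f xb - f y) / edist xb y) y hyx
      have hS0 : globalSlope f xb ≠ 0 :=
        (lt_of_le_of_lt zero_le hSe).ne'
      have hmax : max (globalSlope (fun z => ((g z : EReal))) xb) (ENNReal.ofReal ε)
          < globalSlope f xb := max_lt (hslope xb hxbD hS0) hSe
      rw [globalSlope] at hmax
      obtain ⟨y', hT'⟩ := lt_iSup_iff.mp hmax
      obtain ⟨hne', hT'⟩ := lt_iSup_iff.mp hT'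
      have hne' : y' ≠ xb := hne'
      have hy'T : f y' ≠ ⊤ := by
        intro hT
        rw [hterm_top y' hT] at hT'
        exact absurd hT' (not_lt.mpr zero_le)
      have hDy' : (((f y').toReal : ℝ) : EReal) = f y' := EReal.coe_toReal hy'T (hne_bot y')
      set Fy' : ℝ := (f y').toReal with hFy'
      have hd' : 0 < dist xb y' := dist_pos.mpr (Ne.symm hne')
      rw [hterm y' hy'T hd'] at hT'
      have hTe : ENNReal.ofReal ε < ENNReal.ofReal ((Fxb - Fy') / dist xb y') :=
        lt_of_le_of_lt (le_max_right _ _) hT'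
      have hTg : globalSlope (fun z => ((g z : EReal))) xb
          < ENNReal.ofReal ((Fxb - Fy') / dist xb y') :=
        lt_of_le_of_lt (le_max_left _ _) hT'
      have hde : ε < (Fxb - Fy') / dist xb y' := by
        rwa [ENNReal.ofReal_lt_ofReal_iff_of_nonneg hε.le] at hTe
      have hdiv_pos : 0 < (Fxb - Fy') / dist xb y' := lt_trans hε hde
      have hfe : ε * dist xb y' < Fxb - Fy' := (lt_div_iff₀ hd').mp hde
      -- the g-slope term at y' is below the g-slope, hence below the f-term
      have hgterm : erealPos ((g xb : EReal) - (g y' : EReal)) / edist xb y'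
          = ENNReal.ofReal ((g xb - g y') / dist xb y') := by
        have : ((g xb : EReal)) - ((g y' : EReal)) = (((g xb - g y' : ℝ)) : EReal) := by
          norm_cast
        rw [this, erealPos_coe, edist_dist, ENNReal.ofReal_div_of_pos hd']
      have hgle : ENNReal.ofReal ((g xb - g y') / dist xb y')
          < ENNReal.ofReal ((Fxb - Fy') / dist xb y') := by
        refine lt_of_le_of_lt ?_ hTg
        rw [← hgterm]
        exact le_iSup₂ (f := fun z (_ : z ∈ {z : M | z ≠ xb}) =>
          erealPos ((g xb : EReal) - (g z : EReal)) / edist xb z) y' hne'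
      have hgreal : (g xb - g y') / dist xb y' < (Fxb - Fy') / dist xb y' := by
        rwa [ENNReal.ofReal_lt_ofReal_iff hdiv_pos] at hgle
      have hgr : g xb - g y' < Fxb - Fy' :=
        (div_lt_div_iff_of_pos_right hd').mp hgreal
      -- build EkRel y' xb and contradict minimality
      have hrel' : EkRel f g ε y' xb := by
        rw [ekRel_def, ← hDxb, ← hDy']
        constructor
        · rw [dist_comm y' xb]
          exact_mod_cast le_of_lt (by linarith : Fy' + ε * dist xb y' < Fxb)
        · exact_mod_cast le_of_lt (by linarith : Fy' - g y' < Fxb - g xb)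
      exact hne' (hmin y' hrel')
    -- the two inequalities at xb
    have hDx₀' : (((f x₀').toReal : ℝ) : EReal) = f x₀' := EReal.coe_toReal hx₀' (hne_bot x₀')
    refine ⟨xb, hcrit, ?_, hrel0.2⟩
    have h1 := hrel0.1
    rw [← hDxb, ← hDx₀'] at h1 ⊢
    have h1r : Fxb + ε * dist xb x₀' ≤ (f x₀').toReal := by exact_mod_cast h1
    exact_mod_cast (by linarith : Fxb ≤ (f x₀').toReal - ε * dist xb x₀')
  by_cases hx₀ : f x₀ = ⊤
  · obtain ⟨w, hw⟩ := hproper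
    obtain ⟨x, hx, _, h2⟩ := key w hw
    refine ⟨⟨x, hx, ?_, ?_⟩, ?_⟩
    · rw [hx₀, EReal.top_sub_coe]; exact le_top
    · rw [hx₀, EReal.top_sub_coe]; exact le_top
    · rw [hx₀, EReal.top_sub_coe]; exact le_top
  · obtain ⟨x, hx, h1, h2⟩ := key x₀ hx₀
    exact ⟨⟨x, hx, h1, h2⟩, le_trans (iInf₂_le x hx) h2⟩
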